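/- Let n, k, t be positive integers, let α ≥ 0, and let F ∈ ℂ^{n×n} be a unitary matrix all of whose entries satisfy |F_{ij}| ≤ α. Then for every k-sparse vector x̂ ∈ ℂ^n and every t-sparse vector e ∈ ℂ^n, ‖x̂‖₂² + ‖e‖₂² − 2α√(k·t)·‖x̂‖₂·‖e‖₂ ≤ ‖F^{-1}x̂ + e‖₂² ≤ ‖x̂‖₂² + ‖e‖₂² + 2α√(k·t)·‖x̂‖₂·‖e‖₂. -/

import Mathlib

/-- The Euclidean (ℓ2) norm of a complex vector. -/
noncomputable def l2norm {n : ℕ} (x : Fin n → ℂ) : ℝ :=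
  Real.sqrt (∑ i, ‖x i‖ ^ 2)

/-- A vector is `k`-sparse if at most `k` of its entries are nonzero. -/
def Sparse {n : ℕ} (k : ℕ) (x : Fin n → ℂ) : Prop :=
  (Finset.univ.filter (fun i => x i ≠ 0)).card ≤ k

lemma l2norm_sq {n : ℕ} (x : Fin n → ℂ) :
    l2norm x ^ 2 = ∑ i, ‖x i‖ ^ 2 := by
  rw [l2norm, Real.sq_sqrt]
  exact Finset.sum_nonneg fun i _ => sq_nonneg _

lemma l2norm_nonneg {n : ℕ} (x : Fin n → ℂ) : 0 ≤ l2norm x := Real.sqrt_nonneg _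

/-- ℓ1 norm of a sparse vector is at most √k times the ℓ2 norm. -/
lemma l1_le_sqrt_sparse {n k : ℕ} (x : Fin n → ℂ) (hx : Sparse k x) :
    ∑ i, ‖x i‖ ≤ Real.sqrt k * l2norm x := by
  set s := Finset.univ.filter (fun i => x i ≠ 0) with hs
  have h1 : ∑ i, ‖x i‖ = ∑ i ∈ s, ‖x i‖ := by
    rw [eq_comm]
    apply Finset.sum_subset (Finset.subset_univ _)
    intro i _ hi
    simp only [hs, Finset.mem_filter, Finset.mem_univ, true_and, not_not] at hi
    simp [hi]
  have h2 : (∑ i ∈ s, ‖x i‖)^2 ≤ s.card * ∑ i ∈ s, ‖x i‖ ^ 2 :=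
    sq_sum_le_card_mul_sum_sq
  have h3 : ∑ i ∈ s, ‖x i‖ ^ 2 ≤ ∑ i, ‖x i‖ ^ 2 :=
    Finset.sum_le_sum_of_subset_of_nonneg (Finset.subset_univ _)
      (fun i _ _ => sq_nonneg _)
  have h4 : (∑ i, ‖x i‖)^2 ≤ (k : ℝ) * ∑ i, ‖x i‖ ^ 2 := by
    rw [h1]
    refine h2.trans ?_
    have hcard : (s.card : ℝ) ≤ (k : ℝ) := by exact_mod_cast hx
    have hnn : (0:ℝ) ≤ ∑ i ∈ s, ‖x i‖ ^ 2 :=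
      Finset.sum_nonneg fun i _ => sq_nonneg _
    calc (s.card : ℝ) * ∑ i ∈ s, ‖x i‖ ^ 2
        ≤ (k : ℝ) * ∑ i ∈ s, ‖x i‖ ^ 2 :=
          mul_le_mul_of_nonneg_right hcard hnn
      _ ≤ (k : ℝ) * ∑ i, ‖x i‖ ^ 2 :=
          mul_le_mul_of_nonneg_left h3 (by positivity)
  have hnn : 0 ≤ ∑ i, ‖x i‖ :=
    Finset.sum_nonneg fun i _ => norm_nonneg _
  have h5 := Real.sqrt_le_sqrt h4
  rwa [Real.sqrt_sq hnn, Real.sqrt_mul (Nat.cast_nonneg k), ← l2norm] at h5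

/-- Two-sided quadratic estimate for `‖F⁻¹x̂ + e‖₂²` when `F` is unitary with entries of
modulus at most `α`, `x̂` is `k`-sparse and `e` is `t`-sparse. Here `F⁻¹ = Fᴴ`. -/
theorem quadratic_rip_estimate
    (n k t : ℕ) (hn : 0 < n) (hk : 0 < k) (ht : 0 < t) (α : ℝ) (hα : 0 ≤ α)
    (F : Matrix (Fin n) (Fin n) ℂ)
    (hFunit : F * F.conjTranspose = 1 ∧ F.conjTranspose * F = 1)
    (hF : ∀ i j, ‖F i j‖ ≤ α)
    (xh : Fin n → ℂ) (hxh : Sparse k xh)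
    (e : Fin n → ℂ) (he : Sparse t e) :
    l2norm xh ^ 2 + l2norm e ^ 2 - 2 * α * Real.sqrt (k * t) * l2norm xh * l2norm e ≤
        l2norm (F.conjTranspose.mulVec xh + e) ^ 2 ∧
      l2norm (F.conjTranspose.mulVec xh + e) ^ 2 ≤
        l2norm xh ^ 2 + l2norm e ^ 2 + 2 * α * Real.sqrt (k * t) * l2norm xh * l2norm e := by
  set u := F.conjTranspose.mulVec xh with hu
  -- (A) norm preservation
  have hA : ∑ j, ‖u j‖ ^ 2 = ∑ i, ‖xh i‖ ^ 2 := by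
    have hdot : dotProduct (star u) u = dotProduct (star xh) xh := by
      rw [hu, Matrix.star_mulVec, Matrix.dotProduct_mulVec, Matrix.vecMul_vecMul,
        Matrix.conjTranspose_conjTranspose, hFunit.1]
      simp [Matrix.vecMul_one]
    have lhs : dotProduct (star u) u = ((∑ j, ‖u j‖ ^ 2 : ℝ) : ℂ) := by
      simp [dotProduct, Pi.star_apply, Complex.star_def, Complex.sq_norm,
        ← Complex.normSq_eq_conj_mul_self, Complex.ofReal_sum]
    have rhs : dotProduct (star xh) xh = ((∑ i, ‖xh i‖ ^ 2 : ℝ) : ℂ) := by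
      simp [dotProduct, Pi.star_apply, Complex.star_def, Complex.sq_norm,
        ← Complex.normSq_eq_conj_mul_self, Complex.ofReal_sum]
    have h := lhs ▸ rhs ▸ hdot
    exact_mod_cast h
  -- (B) expansion
  have hB : l2norm (u + e) ^ 2 =
      (∑ j, ‖u j‖ ^ 2) + (∑ j, ‖e j‖ ^ 2)
        + 2 * (∑ j, u j * (starRingEnd ℂ) (e j)).re := by
    rw [l2norm_sq]
    simp only [Pi.add_apply, Complex.sq_norm, Complex.normSq_add]
    rw [Finset.sum_add_distrib, Finset.sum_add_distrib, ← Finset.mul_sum,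
      ← Complex.re_sum]
  -- (C) cross term bound
  have hC : |(∑ j, u j * (starRingEnd ℂ) (e j)).re|
      ≤ α * (Real.sqrt k * l2norm xh) * (Real.sqrt t * l2norm e) := by
    have step1 : |(∑ j, u j * (starRingEnd ℂ) (e j)).re|
        ≤ ∑ j, ‖u j‖ * ‖e j‖ := by
      refine (Complex.abs_re_le_norm _).trans ?_
      refine (norm_sum_le _ _).trans ?_
      apply Finset.sum_le_sum
      intro j _
      rw [norm_mul, Complex.norm_conj]
    have hub : ∀ j, ‖u j‖ ≤ α * ∑ i, ‖xh i‖ := by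
      intro j
      have huj : u j = ∑ i, (starRingEnd ℂ) (F i j) * xh i := by
        simp [hu, Matrix.mulVec, dotProduct, Matrix.conjTranspose_apply]
      rw [huj]
      refine (norm_sum_le _ _).trans ?_
      rw [Finset.mul_sum]
      apply Finset.sum_le_sum
      intro i _
      rw [norm_mul, Complex.norm_conj]
      exact mul_le_mul_of_nonneg_right (hF i j) (norm_nonneg _)
    have step2 : ∑ j, ‖u j‖ * ‖e j‖
        ≤ (α * ∑ i, ‖xh i‖) * (∑ j, ‖e j‖) := by
      rw [Finset.mul_sum]
      apply Finset.sum_le_sum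
      intro j _
      exact mul_le_mul_of_nonneg_right (hub j) (norm_nonneg _)
    have step3 : (α * ∑ i, ‖xh i‖) * (∑ j, ‖e j‖)
        ≤ α * (Real.sqrt k * l2norm xh) * (Real.sqrt t * l2norm e) := by
      have hx1 := l1_le_sqrt_sparse xh hxh
      have he1 := l1_le_sqrt_sparse e he
      have hxnn : 0 ≤ ∑ i, ‖xh i‖ :=
        Finset.sum_nonneg fun i _ => norm_nonneg _
      have henn : 0 ≤ ∑ j, ‖e j‖ :=
        Finset.sum_nonneg fun i _ => norm_nonneg _
      have h1 : α * ∑ i, ‖xh i‖ ≤ α * (Real.sqrt k * l2norm xh) :=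
        mul_le_mul_of_nonneg_left hx1 hα
      exact mul_le_mul h1 he1 henn
        (mul_nonneg hα (mul_nonneg (Real.sqrt_nonneg _) (l2norm_nonneg xh)))
    exact step1.trans (step2.trans step3)
  -- combine
  have hkt : Real.sqrt ((k : ℝ) * t) = Real.sqrt k * Real.sqrt t :=
    Real.sqrt_mul (Nat.cast_nonneg k) _
  have habs := abs_le.mp hC
  have heq : 2 * α * Real.sqrt ((k:ℝ) * t) * l2norm xh * l2norm e
      = 2 * (α * (Real.sqrt k * l2norm xh) * (Real.sqrt t * l2norm e)) := by
    rw [hkt]; ring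
  rw [hB, hA, ← l2norm_sq xh, ← l2norm_sq e]
  constructor <;> linarith [habs.1, habs.2]
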